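/- arXiv:math/0401153 — 3 statements merged into one kernel-verified Lean document; each statement's English description precedes it below -/
import Mathlib

section
/- For every natural number k, the ℂ-vector space 𝒱ᵏ of harmonic polynomials in ℂ[X₀,X₁,X₂,X₃] that are homogeneous of degree k has dimension (k+1)². -/
open MvPolynomial

/-- The formal Laplacian `Δ₀ p = ∑ μ, ∂²p/∂X_μ²` on `ℂ[X₀,X₁,X₂,X₃]`. -/
noncomputable def lap : MvPolynomial (Fin 4) ℂ →ₗ[ℂ] MvPolynomial (Fin 4) ℂ :=
  ∑ μ : Fin 4,
    ((MvPolynomial.pderiv μ).toLinearMap ∘ₗ (MvPolynomial.pderiv μ).toLinearMap)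

/-- `𝒱ᵏ`: the subspace of harmonic polynomials homogeneous of degree `k`. -/
noncomputable def Vk (k : ℕ) : Submodule ℂ (MvPolynomial (Fin 4) ℂ) :=
  MvPolynomial.homogeneousSubmodule (Fin 4) ℂ k ⊓ LinearMap.ker lap

namespace HarmAux

abbrev R4 := MvPolynomial (Fin 4) ℂ

noncomputable def r2 : R4 := ∑ μ : Fin 4, X μ ^ 2

lemma lap_apply (p : R4) : lap p = ∑ μ : Fin 4, pderiv μ (pderiv μ p) := by
  simp [lap, LinearMap.sum_apply]

lemma r2_ne_zero : r2 ≠ 0 := by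
  intro h
  have h2 : (eval (fun _ => (1:ℂ))) r2 = 0 := by rw [h]; simp
  simp [r2, Fin.sum_univ_four] at h2
  norm_num at h2

lemma r2_isHomogeneous : r2.IsHomogeneous 2 := by
  apply MvPolynomial.IsHomogeneous.sum
  intro i _
  simpa using isHomogeneous_X_pow (R := ℂ) i 2

lemma degree_eq_sum (d : Fin 4 →₀ ℕ) : d.degree = ∑ i : Fin 4, d i := by
  rw [Finsupp.degree]
  exact Finset.sum_subset (Finset.subset_univ _)
    (fun x _ hx => Finsupp.notMem_support_iff.mp hx)

lemma support_degree {p : R4} {n : ℕ} (h : p.IsHomogeneous n) {d : Fin 4 →₀ ℕ}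
    (hd : d ∈ p.support) : d.degree = n := by
  have := h (MvPolynomial.mem_support_iff.mp hd)
  rwa [Finsupp.degree_eq_weight_one]

lemma isHomogeneous_pderiv {p : R4} {n : ℕ} (h : p.IsHomogeneous n) (i : Fin 4) :
    (pderiv i p).IsHomogeneous (n - 1) := by
  rw [p.as_sum, map_sum]
  apply MvPolynomial.IsHomogeneous.sum
  intro d hd
  rw [pderiv_monomial]
  by_cases hdi : d i = 0
  · simp [hdi, MvPolynomial.isHomogeneous_zero]
  · apply isHomogeneous_monomial
    have hdeg : d.degree = n := support_degree h hd
    rw [degree_eq_sum] at hdeg ⊢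
    have hle : ∀ j, (Finsupp.single i 1) j ≤ d j := by
      intro j
      rcases eq_or_ne i j with rfl | hne
      · simp; omega
      · simp [Finsupp.single_apply, hne]
    simp only [Finsupp.tsub_apply]
    have hsing : ∑ j : Fin 4, (Finsupp.single i 1) j = 1 := by
      simp [Finsupp.single_apply]
    have := Finset.sum_tsub_distrib (s := (Finset.univ : Finset (Fin 4)))
      (f := fun j => d j) (g := fun j => (Finsupp.single i 1) j) (fun j _ => hle j)
    rw [this, hsing, hdeg]
lemma pderiv_zero_of_hom0 {p : R4} (h : p.IsHomogeneous 0) (i : Fin 4) :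
    pderiv i p = 0 := by
  rw [p.as_sum, map_sum]
  apply Finset.sum_eq_zero
  intro d hd
  have hd0 : d = 0 := by
    have := support_degree h hd
    rwa [Finsupp.degree_eq_zero_iff] at this
  subst hd0
  simp [MvPolynomial.monomial_zero', pderiv_C]

lemma lap_zero_of_le_one {p : R4} {n : ℕ} (hn : n ≤ 1) (h : p.IsHomogeneous n) :
    lap p = 0 := by
  rw [lap_apply]
  apply Finset.sum_eq_zero
  intro i _
  have h1 : (pderiv i p).IsHomogeneous 0 := by
    have := isHomogeneous_pderiv h i
    interval_cases n
    · simpa using this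
    · simpa using this
  rw [pderiv_zero_of_hom0 h1 i]

lemma X_mul_pderiv_monomial (i : Fin 4) (d : Fin 4 →₀ ℕ) (a : ℂ) :
    X i * pderiv i (monomial d a) = monomial d (a * (d i : ℂ)) := by
  rw [pderiv_monomial]
  by_cases hdi : d i = 0
  · rw [hdi]; simp
  · rw [X, monomial_mul, one_mul]
    have hsum : (Finsupp.single i 1) + (d - Finsupp.single i 1) = d := by
      ext j
      simp only [Finsupp.add_apply, Finsupp.tsub_apply, Finsupp.single_apply]
      rcases eq_or_ne i j with rfl | hne
      · simp; omega
      · simp [hne]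
    rw [hsum]

lemma euler {p : R4} {n : ℕ} (h : p.IsHomogeneous n) :
    ∑ μ : Fin 4, X μ * pderiv μ p = (n : ℂ) • p := by
  conv_lhs => rw [p.as_sum]
  conv_rhs => rw [p.as_sum]
  rw [Finset.smul_sum]
  simp only [map_sum, Finset.mul_sum]
  rw [Finset.sum_comm]
  apply Finset.sum_congr rfl
  intro d hd
  simp only [X_mul_pderiv_monomial]
  rw [← Finset.sum_congr rfl (fun μ _ => rfl)]
  rw [MvPolynomial.smul_monomial]
  rw [← map_sum (monomial d) (fun μ => coeff d p * (d μ : ℂ)) Finset.univ]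
  congr 1
  rw [← Finset.mul_sum]
  have : ∑ μ : Fin 4, ((d μ : ℂ)) = (n : ℂ) := by
    have hdeg := support_degree h hd
    rw [degree_eq_sum] at hdeg
    rw [← hdeg]
    push_cast
    rfl
  rw [this, smul_eq_mul]
  ring

lemma pderiv_r2 (μ : Fin 4) : pderiv μ r2 = 2 * X μ := by
  rw [r2, map_sum]
  rw [Finset.sum_eq_single μ]
  · rw [pderiv_pow]; simp
  · intro ν _ hν
    rw [pderiv_pow, pderiv_X_of_ne hν]
    ring
  · simp

lemma lap_r2 : lap r2 = 8 := by
  rw [lap_apply]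
  have : ∀ μ : Fin 4, pderiv μ (pderiv μ r2) = 2 := by
    intro μ
    rw [pderiv_r2, pderiv_mul, ← map_ofNat (C : ℂ →+* R4) 2, pderiv_C]
    simp
  simp only [this]
  norm_num [Fin.sum_univ_four]

lemma lap_mul (f g : R4) :
    lap (f * g) = lap f * g + 2 * ∑ μ : Fin 4, pderiv μ f * pderiv μ g + f * lap g := by
  have h : ∀ μ : Fin 4, pderiv μ (pderiv μ (f * g)) =
      pderiv μ (pderiv μ f) * g + 2 * (pderiv μ f * pderiv μ g)
        + f * pderiv μ (pderiv μ g) := by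
    intro μ
    rw [pderiv_mul, map_add, pderiv_mul, pderiv_mul]
    ring
  rw [lap_apply, lap_apply, lap_apply]
  simp only [h]
  rw [Finset.sum_add_distrib, Finset.sum_add_distrib, ← Finset.sum_mul, ← Finset.mul_sum,
    ← Finset.mul_sum]

lemma lap_r2_mul {q : R4} {d : ℕ} (hq : q.IsHomogeneous d) :
    lap (r2 * q) = ((8 + 4 * d : ℕ) : ℂ) • q + r2 * lap q := by
  rw [lap_mul, lap_r2]
  have hmid : ∑ μ : Fin 4, pderiv μ r2 * pderiv μ q
      = 2 * ((d : ℂ) • q) := by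
    rw [← euler hq, Finset.mul_sum]
    apply Finset.sum_congr rfl
    intro μ _
    rw [pderiv_r2]
    ring
  have e2 : ∀ (c : ℂ) (x : R4), (2 : R4) * (c • x) = (2 * c) • x := by
    intro c x
    rw [MvPolynomial.smul_eq_C_mul, MvPolynomial.smul_eq_C_mul, map_mul,
      ← map_ofNat (C : ℂ →+* R4) 2]
    ring
  have e8 : (8 : R4) * q = ((8 : ℕ) : ℂ) • q := by
    rw [MvPolynomial.smul_eq_C_mul, ← map_ofNat (C : ℂ →+* R4) 8]
    norm_num
  rw [hmid, e2, e2, e8, ← add_smul]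
  congr 1
  push_cast
  ring
lemma isHomogeneous_lap {p : R4} {n : ℕ} (h : p.IsHomogeneous n) :
    (lap p).IsHomogeneous (n - 2) := by
  rw [lap_apply]
  apply MvPolynomial.IsHomogeneous.sum
  intro i _
  have := isHomogeneous_pderiv (isHomogeneous_pderiv h i) i
  simpa [Nat.sub_sub] using this

lemma lap_r2_pow_mul : ∀ (m d : ℕ) (q : R4), q.IsHomogeneous d →
    lap (r2 ^ (m + 1) * q)
      = ((4 * (m + 1) * (d + m + 2) : ℕ) : ℂ) • (r2 ^ m * q) + r2 ^ (m + 1) * lap q := by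
  intro m
  induction m with
  | zero =>
    intro d q hq
    rw [pow_one, pow_zero, one_mul, lap_r2_mul hq]
    congr 3
    omega
  | succ m ih =>
    intro d q hq
    have hq' : (r2 * q).IsHomogeneous (d + 2) := by
      have := r2_isHomogeneous.mul hq
      simpa [add_comm] using this
    have h1 : r2 ^ (m + 1 + 1) * q = r2 ^ (m + 1) * (r2 * q) := by ring
    have h2 : r2 ^ (m + 1) * q = r2 ^ m * (r2 * q) := by ring
    rw [h1, ih (d + 2) (r2 * q) hq', lap_r2_mul hq, ← h2]
    rw [mul_add (r2 ^ (m + 1))]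
    have h3 : r2 ^ (m + 1) * (((8 + 4 * d : ℕ) : ℂ) • q)
        = ((8 + 4 * d : ℕ) : ℂ) • (r2 ^ (m + 1) * q) := by
      rw [mul_smul_comm]
    have h4 : r2 ^ (m + 1) * (r2 * lap q) = r2 ^ (m + 1 + 1) * lap q := by ring
    rw [h3, h4, ← add_assoc, ← add_smul]
    congr 2
    push_cast
    ring

lemma pow_r2_ne_zero (m : ℕ) : r2 ^ m ≠ 0 := pow_ne_zero m r2_ne_zero

lemma key : ∀ d : ℕ, ∀ (m : ℕ) (q : R4), q.IsHomogeneous d →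
    lap (r2 ^ (m + 1) * q) = 0 → q = 0 := by
  intro d
  induction d using Nat.strong_induction_on with
  | _ d ih =>
    intro m q hq hlap
    set a : ℂ := ((4 * (m + 1) * (d + m + 2) : ℕ) : ℂ) with ha
    have hane : a ≠ 0 := by
      rw [ha]
      exact Nat.cast_ne_zero.mpr (by positivity)
    have heq : a • (r2 ^ m * q) + r2 ^ (m + 1) * lap q = 0 := by
      rw [← lap_r2_pow_mul m d q hq, hlap]
    have hfac : r2 ^ m * (a • q + r2 * lap q) = 0 := by
      rw [mul_add, mul_smul_comm,
        show r2 ^ m * (r2 * lap q) = r2 ^ (m + 1) * lap q from by ring]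
      exact heq
    have h0 : a • q + r2 * lap q = 0 := by
      rcases mul_eq_zero.mp hfac with h | h
      · exact absurd h (pow_r2_ne_zero m)
      · exact h
    match d, hq, ih with
    | 0, hq, ih =>
      rw [lap_zero_of_le_one (by omega) hq, mul_zero, add_zero] at h0
      exact (smul_eq_zero.mp h0).resolve_left hane
    | 1, hq, ih =>
      rw [lap_zero_of_le_one (by omega) hq, mul_zero, add_zero] at h0
      exact (smul_eq_zero.mp h0).resolve_left hane
    | (e + 2), hq, ih =>
      have hl : (lap q).IsHomogeneous e := by
        simpa using isHomogeneous_lap hq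
      set q' : R4 := (-(a⁻¹)) • lap q with hq'def
      have hq' : q'.IsHomogeneous e := by
        have := Submodule.smul_mem (homogeneousSubmodule (Fin 4) ℂ e) (-(a⁻¹))
          ((mem_homogeneousSubmodule _ _).mpr hl)
        exact (mem_homogeneousSubmodule _ _).mp this
      have hneg : a • q = -(r2 * lap q) := eq_neg_of_add_eq_zero_left h0
      have hqr : q = r2 * q' := by
        calc q = a⁻¹ • (a • q) := by
                rw [smul_smul, inv_mul_cancel₀ hane, one_smul]
          _ = a⁻¹ • (-(r2 * lap q)) := by rw [hneg]
          _ = r2 * q' := by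
                rw [hq'def, mul_smul_comm, neg_smul, smul_neg]
      have hlap' : lap (r2 ^ (m + 1 + 1) * q') = 0 := by
        rw [show r2 ^ (m + 1 + 1) * q' = r2 ^ (m + 1) * (r2 * q') from by ring, ← hqr]
        exact hlap
      have hz := ih e (by omega) (m + 1) q' hq' hlap'
      rw [hqr, hz, mul_zero]
instance homFD (k : ℕ) : FiniteDimensional ℂ (homogeneousSubmodule (Fin 4) ℂ k) := by
  apply Submodule.finiteDimensional_of_le (S₂ := restrictTotalDegree (Fin 4) ℂ k)
  intro p hp
  rw [mem_restrictTotalDegree]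
  exact MvPolynomial.IsHomogeneous.totalDegree_le hp

noncomputable def homEquiv (k : ℕ) : {d : Fin 4 →₀ ℕ // d.degree = k} ≃ Sym (Fin 4) k :=
  (Multiset.toFinsupp (α := Fin 4)).toEquiv.symm.subtypeEquiv (fun d => by
    have hcard : Multiset.card (Multiset.toFinsupp.symm d) = d.degree := by
      rw [show (Multiset.toFinsupp.symm d : Multiset (Fin 4)) = Finsupp.toMultiset d from rfl,
        Finsupp.card_toMultiset]
      rfl
    constructor
    · intro h; rw [← h, ← hcard]; rfl
    · intro h; rw [← hcard]; exact h)

noncomputable instance (k : ℕ) : Fintype {d : Fin 4 →₀ ℕ // d.degree = k} :=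
  Fintype.ofEquiv _ (homEquiv k).symm

noncomputable instance (k : ℕ) : Fintype ({d : Fin 4 →₀ ℕ | d.degree = k} : Set _) :=
  inferInstanceAs (Fintype {d : Fin 4 →₀ ℕ // d.degree = k})

lemma finrank_homog (k : ℕ) :
    Module.finrank ℂ (homogeneousSubmodule (Fin 4) ℂ k) = (k + 3).choose 3 := by
  have h2 : Module.finrank ℂ (({d : Fin 4 →₀ ℕ | d.degree = k} : Set _) →₀ ℂ)
      = (k + 3).choose 3 := by
    rw [Module.finrank_finsupp_self]
    have hc : Fintype.card ({d : Fin 4 →₀ ℕ | d.degree = k} : Set _)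
        = Fintype.card (Sym (Fin 4) k) := Fintype.card_congr (homEquiv k)
    rw [hc]
    rw [Sym.card_sym_eq_choose]
    simp only [Fintype.card_fin]
    rw [show 4 + k - 1 = k + 3 from by omega]
    have h := Nat.choose_symm (by omega : k ≤ k + 3)
    rw [show k + 3 - k = 3 from by omega] at h
    rw [← h]
  rw [homogeneousSubmodule_eq_finsupp_supported]
  exact (LinearEquiv.finrank_eq (AddMonoidAlgebra.supportedEquivFinsupp
    {d : Fin 4 →₀ ℕ | d.degree = k})).trans h2

lemma choose_step (n : ℕ) : (n + 2).choose 3 = n.choose 3 + n ^ 2 := by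
  induction n with
  | zero => decide
  | succ n ih =>
    have p1 : (n + 2 + 1).choose (2 + 1) = (n + 2).choose 2 + (n + 2).choose (2 + 1) :=
      Nat.choose_succ_succ' (n + 2) 2
    have p2 : (n + 1).choose (2 + 1) = n.choose 2 + n.choose (2 + 1) :=
      Nat.choose_succ_succ' n 2
    have p3 : (n + 1 + 1).choose (1 + 1) = (n + 1).choose 1 + (n + 1).choose (1 + 1) :=
      Nat.choose_succ_succ' (n + 1) 1
    have p4 : (n + 1).choose (1 + 1) = n.choose 1 + n.choose (1 + 1) :=
      Nat.choose_succ_succ' n 1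
    have c1 : (n + 1).choose 1 = n + 1 := Nat.choose_one_right _
    have c2 : n.choose 1 = n := Nat.choose_one_right _
    have e1 : (n + 1) ^ 2 = n ^ 2 + 2 * n + 1 := by ring
    have e2 : n ^ 2 ≥ 0 := by positivity
    simp only [show n + 2 + 1 = n + 3 from by omega, show n + 1 + 2 = n + 3 from by omega,
      show n + 1 + 1 = n + 2 from by omega, show 2 + 1 = 3 from rfl,
      show 1 + 1 = 2 from rfl] at p1 p2 p3 p4 ⊢
    omega
lemma Vk_low {k : ℕ} (hk : k ≤ 1) : Vk k = homogeneousSubmodule (Fin 4) ℂ k := by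
  apply le_antisymm inf_le_left
  refine le_inf le_rfl ?_
  intro p hp
  rw [LinearMap.mem_ker]
  exact lap_zero_of_le_one hk hp

end HarmAux

set_option maxHeartbeats 1000000 in
set_option synthInstance.maxHeartbeats 400000 in
open HarmAux in
/-- `dim 𝒱ᵏ = (k+1)²`. -/
theorem finrank_Vk (k : ℕ) : Module.finrank ℂ (Vk k) = (k + 1) ^ 2 := by
  match k with
  | 0 =>
    rw [Vk_low (by omega), finrank_homog]
    decide
  | 1 =>
    rw [Vk_low (by omega), finrank_homog]
    decide
  | (d + 2) =>
    set Pk := homogeneousSubmodule (Fin 4) ℂ (d + 2) with hPk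
    set Pd := homogeneousSubmodule (Fin 4) ℂ d with hPd
    set L : Pk →ₗ[ℂ] R4 := lap.domRestrict Pk with hL
    -- the multiplication-by-r2 endomorphism trick : T q = lap (r2 * q) on Pd
    have hT : ∀ x ∈ Pd, (lap ∘ₗ LinearMap.mulLeft ℂ r2) x ∈ Pd := by
      intro x hx
      rw [hPd, mem_homogeneousSubmodule] at hx ⊢
      have := isHomogeneous_lap (r2_isHomogeneous.mul hx)
      simpa using this
    set T : Pd →ₗ[ℂ] Pd := (lap ∘ₗ LinearMap.mulLeft ℂ r2).restrict hT with hTdef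
    have hTinj : Function.Injective T := by
      rw [← LinearMap.ker_eq_bot, Submodule.eq_bot_iff]
      intro x hx0
      rw [LinearMap.mem_ker] at hx0
      have h1 : lap (r2 * (x : R4)) = 0 := by
        have := congrArg (Subtype.val) hx0
        simpa [hTdef, LinearMap.restrict_apply, LinearMap.mulLeft_apply] using this
      have hxh : (x : R4).IsHomogeneous d := x.2
      have h2 : lap (r2 ^ (0 + 1) * (x : R4)) = 0 := by
        rw [zero_add, pow_one]; exact h1
      have := key d 0 x hxh h2
      exact Subtype.ext this
    have hTsurj : Function.Surjective T :=
      (LinearMap.injective_iff_surjective).mp hTinj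
    have hmap : Submodule.map lap Pk = Pd := by
      apply le_antisymm
      · rintro _ ⟨p, hp, rfl⟩
        simp only [SetLike.mem_coe, hPk, mem_homogeneousSubmodule] at hp
        rw [hPd, mem_homogeneousSubmodule]
        have := isHomogeneous_lap hp
        simpa using this
      · intro q hq
        obtain ⟨x, hx⟩ := hTsurj ⟨q, hq⟩
        have hval : lap (r2 * (x : R4)) = q := by
          have := congrArg (Subtype.val) hx
          simpa [hTdef, LinearMap.restrict_apply, LinearMap.mulLeft_apply] using this
        refine ⟨r2 * (x : R4), ?_, hval⟩
        simp only [SetLike.mem_coe, hPk, mem_homogeneousSubmodule]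
        have := r2_isHomogeneous.mul x.2
        simpa [add_comm] using this
    have h5 := LinearMap.finrank_range_add_finrank_ker L
    rw [show LinearMap.range L = Pd from by
      rw [hL, LinearMap.range_domRestrict, hmap]] at h5
    have hkerL : LinearMap.ker L = Submodule.comap Pk.subtype (Pk ⊓ LinearMap.ker lap) := by
      rw [hL, LinearMap.ker_domRestrict]
      ext x
      simp [Submodule.mem_comap, x.2]
    have h6 : Module.finrank ℂ (LinearMap.ker L)
        = Module.finrank ℂ (Vk (d + 2)) := by
      rw [hkerL]
      exact (Submodule.comapSubtypeEquivOfLe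
        (inf_le_left : Pk ⊓ LinearMap.ker lap ≤ Pk)).finrank_eq
    have hfk : Module.finrank ℂ Pk = (d + 2 + 3).choose 3 := finrank_homog (d + 2)
    have hfd : Module.finrank ℂ Pd = (d + 3).choose 3 := finrank_homog d
    have hcs := choose_step (d + 3)
    have e1 : d + 3 + 2 = d + 2 + 3 := by omega
    rw [e1] at hcs
    have e2 : (d + 2 + 1) ^ 2 = (d + 3) ^ 2 := by norm_num
    rw [hfd, hfk] at h5
    rw [← h6, e2]
    omega
end

section
/- Let k be an even natural number. The (k+1)² polynomials Φᵏ_IJ = (X·N_IJ)^k, for I,J ∈ {0,…,k}, form a linearly independent family in the ℂ-vector space ℂ[X₀,X₁,X₂,X₃]. -/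
open MvPolynomial

/-- The linear polynomial `X·N = ∑ μ, N^μ X_μ` in `ℂ[X₀,X₁,X₂,X₃]`. -/
noncomputable def linPoly (N : Fin 4 → ℂ) : MvPolynomial (Fin 4) ℂ :=
  ∑ μ, MvPolynomial.C (N μ) * MvPolynomial.X μ

/-- The family of null vectors `N(a,b) = (cos a, i sin b, i cos b, sin a) ∈ ℂ⁴`. -/
noncomputable def Ngen (a b : ℝ) : Fin 4 → ℂ :=
  ![(Real.cos a : ℂ), Complex.I * (Real.sin b : ℂ), Complex.I * (Real.cos b : ℂ),
    (Real.sin a : ℂ)]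

/-- `α := 2π/(k+1)`. -/
noncomputable def alphaK (k : ℕ) : ℝ := 2 * Real.pi / (k + 1)

/-- The null vectors `N_IJ := N(Iα, Jα)`. -/
noncomputable def NIJ (k I J : ℕ) : Fin 4 → ℂ := Ngen (I * alphaK k) (J * alphaK k)

/-- The polynomials `Φᵏ_IJ := (X·N_IJ)^k`. -/
noncomputable def Phi (k I J : ℕ) : MvPolynomial (Fin 4) ℂ := (linPoly (NIJ k I J)) ^ k

open Finset



noncomputable def Ek (k : ℕ) (m : ℤ) : ℂ :=
  Complex.exp (2 * Real.pi * Complex.I * m / ((k : ℂ) + 1))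

lemma Ek_add (k : ℕ) (m n : ℤ) : Ek k (m + n) = Ek k m * Ek k n := by
  rw [Ek, Ek, Ek, ← Complex.exp_add]
  congr 1
  push_cast
  ring

lemma Ek_zero (k : ℕ) : Ek k 0 = 1 := by simp [Ek]

lemma Ek_dvd (k : ℕ) (m : ℤ) (h : ((k : ℤ) + 1) ∣ m) : Ek k m = 1 := by
  obtain ⟨t, rfl⟩ := h
  rw [Ek]
  have hk : ((k : ℂ) + 1) ≠ 0 := Nat.cast_add_one_ne_zero k
  have : (2 * (Real.pi : ℂ) * Complex.I * ((((k : ℤ) + 1) * t : ℤ) : ℂ) / ((k : ℂ) + 1))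
      = (t : ℂ) * (2 * (Real.pi : ℂ) * Complex.I) := by
    push_cast
    field_simp
  rw [this, Complex.exp_int_mul_two_pi_mul_I]

lemma Ek_congr (k : ℕ) (m m' : ℤ) (h : ((k : ℤ) + 1) ∣ (m - m')) : Ek k m = Ek k m' := by
  rw [show m = m' + (m - m') by ring, Ek_add, Ek_dvd _ _ h, mul_one]

lemma Ek_pow (k : ℕ) (m : ℤ) (t : ℕ) : Ek k m ^ t = Ek k (m * t) := by
  induction t with
  | zero => simp [Ek_zero]
  | succ n ih =>
      rw [pow_succ, ih, ← Ek_add]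
      congr 1
      push_cast
      ring

lemma Ek_ne_one (k : ℕ) (m : ℤ) (h : ¬ ((k : ℤ) + 1) ∣ m) : Ek k m ≠ 1 := by
  rw [Ek]
  intro h1
  rw [Complex.exp_eq_one_iff] at h1
  obtain ⟨t, ht⟩ := h1
  apply h
  have hk : ((k : ℂ) + 1) ≠ 0 := Nat.cast_add_one_ne_zero k
  have hpi : (Real.pi : ℂ) ≠ 0 := by exact_mod_cast Real.pi_ne_zero
  have hI : Complex.I ≠ 0 := Complex.I_ne_zero
  have hm : (m : ℂ) = t * ((k : ℂ) + 1) := by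
    field_simp at ht
    have h2 : (2 : ℂ) ≠ 0 := two_ne_zero
    -- ht : 2 * π * I * m = t * (2 * π * I) * (k+1)  (roughly)
    apply mul_left_cancel₀ (mul_ne_zero (mul_ne_zero h2 hpi) hI)
    linear_combination (2 * (Real.pi : ℂ) * Complex.I) * ht
  have : (m : ℤ) = t * ((k : ℤ) + 1) := by exact_mod_cast hm
  exact ⟨t, by linarith⟩

lemma Ek_sum (k : ℕ) (m : ℤ) :
    ∑ p ∈ Finset.range (k + 1), Ek k (m * p) =
      if ((k : ℤ) + 1) ∣ m then ((k : ℕ) + 1 : ℂ) else 0 := by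
  split_ifs with h
  · have h' : ∀ p ∈ Finset.range (k + 1), Ek k (m * p) = 1 := fun p _ => Ek_dvd k (m * p) (h.mul_right _)
    rw [Finset.sum_congr rfl h']
    simp
  · have h1 : Ek k m ≠ 1 := Ek_ne_one k m h
    have : ∀ p ∈ Finset.range (k + 1), Ek k (m * p) = Ek k m ^ p := by
      intro p _; rw [Ek_pow]
    rw [Finset.sum_congr rfl this, geom_sum_eq h1]
    have hone : Ek k m ^ (k + 1) = 1 := by
      rw [Ek_pow]
      apply Ek_dvd
      exact ⟨m, by push_cast; ring⟩
    rw [hone]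
    simp

abbrev R2 := Polynomial (Polynomial ℂ)

noncomputable def C2 : ℂ →+* R2 := Polynomial.C.comp Polynomial.C

noncomputable def zz : R2 := Polynomial.C Polynomial.X
noncomputable def ww : R2 := Polynomial.X

noncomputable def substF : Fin 4 → R2 :=
  ![ww * (zz ^ 2 + 1),
    zz - zz * ww ^ 2,
    -(C2 Complex.I) * (zz * ww ^ 2 + zz),
    -(C2 Complex.I) * (zz ^ 2 * ww - ww)]

noncomputable def σ4 : MvPolynomial (Fin 4) ℂ →ₐ[ℂ] R2 := MvPolynomial.aeval substF

lemma Ek_cos_sin (k : ℕ) (m : ℕ) :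
    Ek k m = (Real.cos (m * alphaK k) : ℂ) + (Real.sin (m * alphaK k) : ℂ) * Complex.I := by
  have h : Ek k m = Complex.exp (((m * alphaK k : ℝ) : ℂ) * Complex.I) := by
    rw [Ek, alphaK]
    congr 1
    have hk : ((k : ℝ) + 1) ≠ 0 := Nat.cast_add_one_ne_zero k
    push_cast
    field_simp
  rw [h, Complex.exp_mul_I, Complex.ofReal_cos, Complex.ofReal_sin]

lemma Ek_neg_cos_sin (k : ℕ) (m : ℕ) :
    Ek k (-(m : ℤ)) = (Real.cos (m * alphaK k) : ℂ) - (Real.sin (m * alphaK k) : ℂ) * Complex.I := by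
  have h : Ek k (-(m:ℤ)) = Complex.exp (((-(m * alphaK k) : ℝ) : ℂ) * Complex.I) := by
    rw [Ek, alphaK]
    congr 1
    have hk : ((k : ℝ) + 1) ≠ 0 := Nat.cast_add_one_ne_zero k
    push_cast
    field_simp
  rw [h, Complex.exp_mul_I]
  push_cast
  rw [Complex.cos_neg, Complex.sin_neg]
  ring

lemma sigma4_linPoly (k I J : ℕ) :
    σ4 (linPoly (NIJ k I J)) =
      C2 (Ek k (-(I : ℤ))) * (zz ^ 2 * ww) + C2 (Ek k I) * ww +
        (C2 (Ek k (-(J : ℤ))) * (zz * ww ^ 2) + C2 (Ek k J) * zz) := by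
  have hI2 : C2 Complex.I * C2 Complex.I = -1 := by
    rw [← map_mul, Complex.I_mul_I, map_neg, map_one]
  rw [linPoly, map_sum, Fin.sum_univ_four]
  simp only [map_mul, σ4, MvPolynomial.aeval_X, MvPolynomial.aeval_C]
  simp only [NIJ, Ngen, Matrix.cons_val_zero, Matrix.cons_val_one, Matrix.head_cons,
    Matrix.cons_val_two, Matrix.tail_cons, Matrix.cons_val_three, substF]
  rw [Ek_cos_sin k I, Ek_cos_sin k J, Ek_neg_cos_sin k I, Ek_neg_cos_sin k J]
  have halg : ∀ c : ℂ, (algebraMap ℂ R2) c = C2 c := fun c => rfl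
  simp only [halg, map_add, map_sub, map_mul]
  linear_combination (-(C2 ((Real.cos ((J:ℝ) * alphaK k) : ℂ))) * (zz * ww ^ 2 + zz)) * hI2

noncomputable def cf (a b : ℕ) : R2 →ₗ[ℂ] ℂ where
  toFun p := (p.coeff b).coeff a
  map_add' p q := by simp
  map_smul' c p := by simp [Polynomial.coeff_smul]

lemma cf_term (c : ℂ) (α β a b : ℕ) :
    cf a b (C2 c * (zz ^ α * ww ^ β)) = if α = a ∧ β = b then c else 0 := by
  have h : C2 c * (zz ^ α * ww ^ β)
      = Polynomial.C (Polynomial.C c * Polynomial.X ^ α) * Polynomial.X ^ β := by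
    rw [map_mul, map_pow]
    show C2 c * (zz ^ α * ww ^ β) = _
    rw [C2, zz, ww]
    simp only [RingHom.coe_comp, Function.comp_apply]
    ring
  rw [h]
  show ((Polynomial.C (Polynomial.C c * Polynomial.X ^ α) * Polynomial.X ^ β).coeff b).coeff a = _
  rw [Polynomial.C_mul_X_pow_eq_monomial, Polynomial.coeff_monomial]
  by_cases hβ : β = b <;> by_cases hα : α = a <;>
    simp [hβ, hα, Polynomial.C_mul_X_pow_eq_monomial, Polynomial.coeff_monomial]

lemma pow_expand (k : ℕ) (c₁ c₂ c₃ c₄ : ℂ) :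
    (C2 c₁ * (zz ^ 2 * ww) + C2 c₂ * ww + (C2 c₃ * (zz * ww ^ 2) + C2 c₄ * zz)) ^ k
      = ∑ j ∈ range (k + 1), ∑ r ∈ range (j + 1), ∑ s ∈ range (k - j + 1),
          C2 (c₁ ^ r * c₂ ^ (j - r) * c₃ ^ s * c₄ ^ (k - j - s) *
              ((k.choose j * j.choose r * (k - j).choose s : ℕ) : ℂ)) *
            (zz ^ (2 * r + (k - j)) * ww ^ (2 * s + j)) := by
  rw [add_pow]
  refine Finset.sum_congr rfl (fun j hj => ?_)
  have hj' : j ≤ k := Finset.mem_range_succ_iff.mp hj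
  have h₁ : (C2 c₁ * (zz ^ 2 * ww) + C2 c₂ * ww) ^ j
      = ∑ r ∈ range (j + 1), C2 (c₁ ^ r * c₂ ^ (j - r) * ((j.choose r : ℕ) : ℂ)) *
          (zz ^ (2 * r) * ww ^ j) := by
    rw [add_pow]
    refine Finset.sum_congr rfl (fun r hr => ?_)
    have hr' : r ≤ j := Finset.mem_range_succ_iff.mp hr
    have e1 : r + (j - r) = j := by omega
    calc (C2 c₁ * (zz ^ 2 * ww)) ^ r * (C2 c₂ * ww) ^ (j - r) * (j.choose r : R2)
        = C2 (c₁ ^ r) * C2 (c₂ ^ (j - r)) * (j.choose r : R2) *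
            ((zz ^ 2) ^ r * (ww ^ r * ww ^ (j - r))) := by
          rw [mul_pow, mul_pow, mul_pow, map_pow, map_pow]
          ring
      _ = C2 (c₁ ^ r * c₂ ^ (j - r) * ((j.choose r : ℕ) : ℂ)) * (zz ^ (2 * r) * ww ^ j) := by
          rw [← pow_add, e1, ← pow_mul, map_mul, map_mul, map_natCast]
  have h₂ : (C2 c₃ * (zz * ww ^ 2) + C2 c₄ * zz) ^ (k - j)
      = ∑ s ∈ range (k - j + 1), C2 (c₃ ^ s * c₄ ^ (k - j - s) * (((k - j).choose s : ℕ) : ℂ)) *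
          (zz ^ (k - j) * ww ^ (2 * s)) := by
    rw [add_pow]
    refine Finset.sum_congr rfl (fun s hs => ?_)
    have hs' : s ≤ k - j := Finset.mem_range_succ_iff.mp hs
    have e2 : s + (k - j - s) = k - j := by omega
    calc (C2 c₃ * (zz * ww ^ 2)) ^ s * (C2 c₄ * zz) ^ (k - j - s) * ((k - j).choose s : R2)
        = C2 (c₃ ^ s) * C2 (c₄ ^ (k - j - s)) * ((k - j).choose s : R2) *
            ((zz ^ s * zz ^ (k - j - s)) * (ww ^ 2) ^ s) := by
          rw [mul_pow, mul_pow, mul_pow, map_pow, map_pow]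
          ring
      _ = C2 (c₃ ^ s * c₄ ^ (k - j - s) * (((k - j).choose s : ℕ) : ℂ)) *
            (zz ^ (k - j) * ww ^ (2 * s)) := by
          rw [← pow_add, e2, ← pow_mul, map_mul, map_mul, map_natCast]
  rw [h₁, h₂, Finset.sum_mul_sum, Finset.sum_mul]
  refine Finset.sum_congr rfl (fun r hr => ?_)
  rw [Finset.sum_mul]
  refine Finset.sum_congr rfl (fun s hs => ?_)
  calc C2 (c₁ ^ r * c₂ ^ (j - r) * ((j.choose r : ℕ) : ℂ)) * (zz ^ (2 * r) * ww ^ j) *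
        (C2 (c₃ ^ s * c₄ ^ (k - j - s) * (((k - j).choose s : ℕ) : ℂ)) *
          (zz ^ (k - j) * ww ^ (2 * s))) * (k.choose j : R2)
      = (C2 (c₁ ^ r * c₂ ^ (j - r) * ((j.choose r : ℕ) : ℂ)) *
          C2 (c₃ ^ s * c₄ ^ (k - j - s) * (((k - j).choose s : ℕ) : ℂ)) * (k.choose j : R2)) *
          ((zz ^ (2 * r) * zz ^ (k - j)) * (ww ^ (2 * s) * ww ^ j)) := by ring
    _ = _ := by
        rw [← pow_add, ← pow_add, ← map_natCast C2 (k.choose j), ← map_mul, ← map_mul]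
        congr 2
        push_cast
        ring

noncomputable def Mcount (k a b : ℕ) : ℕ :=
  ∑ j ∈ range (k + 1), ∑ r ∈ range (j + 1), ∑ s ∈ range (k - j + 1),
    if (2 * r + (k - j) = a ∧ 2 * s + j = b) then
      k.choose j * j.choose r * (k - j).choose s else 0


lemma cf_pow (k I J a b : ℕ) (p q : ℕ)
    (ha : ((k : ℤ) + 1) ∣ ((k : ℤ) - a - p)) (hb : ((k : ℤ) + 1) ∣ ((k : ℤ) - b - q)) :
    cf a b ((C2 (Ek k (-(I : ℤ))) * (zz ^ 2 * ww) + C2 (Ek k I) * ww +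
        (C2 (Ek k (-(J : ℤ))) * (zz * ww ^ 2) + C2 (Ek k J) * zz)) ^ k)
      = (Mcount k a b : ℂ) * Ek k ((I : ℤ) * p + (J : ℤ) * q) := by
  rw [pow_expand]
  simp only [map_sum]
  have key : ∀ j ∈ range (k + 1), ∀ r ∈ range (j + 1), ∀ s ∈ range (k - j + 1),
      cf a b (C2 ((Ek k (-(I:ℤ))) ^ r * (Ek k I) ^ (j - r) * (Ek k (-(J:ℤ))) ^ s *
            (Ek k J) ^ (k - j - s) *
            ((k.choose j * j.choose r * (k - j).choose s : ℕ) : ℂ)) *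
          (zz ^ (2 * r + (k - j)) * ww ^ (2 * s + j)))
        = (if (2 * r + (k - j) = a ∧ 2 * s + j = b) then
            ((k.choose j * j.choose r * (k - j).choose s : ℕ) : ℂ) else 0) *
            Ek k ((I : ℤ) * p + (J : ℤ) * q) := by
    intro j hj r hr s hs
    have hj' : j ≤ k := Finset.mem_range_succ_iff.mp hj
    have hr' : r ≤ j := Finset.mem_range_succ_iff.mp hr
    have hs' : s ≤ k - j := Finset.mem_range_succ_iff.mp hs
    rw [cf_term]
    by_cases hcond : (2 * r + (k - j) = a ∧ 2 * s + j = b)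
    · rw [if_pos hcond, if_pos hcond]
      obtain ⟨hc1, hc2⟩ := hcond
      have hE : (Ek k (-(I:ℤ))) ^ r * (Ek k I) ^ (j - r) * (Ek k (-(J:ℤ))) ^ s *
          (Ek k J) ^ (k - j - s) = Ek k ((I : ℤ) * p + (J : ℤ) * q) := by
        rw [Ek_pow, Ek_pow, Ek_pow, Ek_pow, ← Ek_add, ← Ek_add, ← Ek_add]
        apply Ek_congr
        have h1 : ((k : ℤ) + 1) ∣ (I : ℤ) * ((j : ℤ) - 2 * r - p) := by
          have : (j : ℤ) - 2 * r - p = (k : ℤ) - a - p := by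
            have : ((k - j : ℕ) : ℤ) = (k : ℤ) - j := by omega
            omega
          rw [this]
          exact Dvd.dvd.mul_left ha _
        have h2 : ((k : ℤ) + 1) ∣ (J : ℤ) * ((k : ℤ) - j - 2 * s - q) := by
          have : (k : ℤ) - j - 2 * s - q = (k : ℤ) - b - q := by omega
          rw [this]
          exact Dvd.dvd.mul_left hb _
        have := dvd_add h1 h2
        refine Eq.mpr (congrArg (fun x : ℤ => ((k : ℤ) + 1) ∣ x) ?_) this
        have e1 : ((j - r : ℕ) : ℤ) = (j : ℤ) - r := by omega
        have e2 : ((k - j - s : ℕ) : ℤ) = (k : ℤ) - j - s := by omega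
        rw [e1, e2]
        push_cast
        ring
      rw [mul_comm] at hE ⊢
      rw [← hE]
      ring
    · rw [if_neg hcond, if_neg hcond, zero_mul]
  rw [Finset.sum_congr rfl (fun j hj => Finset.sum_congr rfl (fun r hr =>
    Finset.sum_congr rfl (fun s hs => key j hj r hr s hs)))]
  simp only [← Finset.sum_mul]
  congr 1
  rw [Mcount]
  push_cast
  rfl

lemma exists_jrs (k p q : ℕ) (hk : Even k) (hp : p ≤ k) (hq : q ≤ k) :
    ∃ j r s : ℕ, j ≤ k ∧ r ≤ j ∧ s ≤ k - j ∧
      ((j : ℤ) - 2 * r - p = 0 ∨ (j : ℤ) - 2 * r - p = -((k : ℤ) + 1)) ∧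
      ((k : ℤ) - j - 2 * s - q = 0 ∨ (k : ℤ) - j - 2 * s - q = -((k : ℤ) + 1)) := by
  obtain ⟨K, rfl⟩ := hk
  have hPQ : ∃ P Q : ℤ,
      (P - p = 0 ∨ P - p = -((K + K : ℤ) + 1)) ∧
      (Q - q = 0 ∨ Q - q = -((K + K : ℤ) + 1)) ∧
      P.natAbs + Q.natAbs ≤ K + K ∧ (P + Q) % 2 = 0 := by
    by_cases h1 : p ≤ K <;> by_cases h2 : q ≤ K <;> by_cases h3 : (p + q) % 2 = 0
    · exact ⟨p, q, by omega, by omega, by omega, by omega⟩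
    · by_cases h4 : q < p
      · exact ⟨(p : ℤ) - (K + K + 1), q, by omega, by omega, by omega, by omega⟩
      · exact ⟨p, (q : ℤ) - (K + K + 1), by omega, by omega, by omega, by omega⟩
    · by_cases h4 : (p : ℤ) < K + K + 1 - q
      · exact ⟨p, q, by omega, by omega, by omega, by omega⟩
      · exact ⟨(p : ℤ) - (K + K + 1), (q : ℤ) - (K + K + 1), by omega, by omega, by omega, by omega⟩
    · exact ⟨p, (q : ℤ) - (K + K + 1), by omega, by omega, by omega, by omega⟩
    · by_cases h4 : (q : ℤ) < K + K + 1 - p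
      · exact ⟨p, q, by omega, by omega, by omega, by omega⟩
      · exact ⟨(p : ℤ) - (K + K + 1), (q : ℤ) - (K + K + 1), by omega, by omega, by omega, by omega⟩
    · exact ⟨(p : ℤ) - (K + K + 1), q, by omega, by omega, by omega, by omega⟩
    · exact ⟨(p : ℤ) - (K + K + 1), (q : ℤ) - (K + K + 1), by omega, by omega, by omega, by omega⟩
    · by_cases h4 : p < q
      · exact ⟨p, (q : ℤ) - (K + K + 1), by omega, by omega, by omega, by omega⟩
      · exact ⟨(p : ℤ) - (K + K + 1), q, by omega, by omega, by omega, by omega⟩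
  obtain ⟨P, Q, hP, hQ, hsum, hpar⟩ := hPQ
  refine ⟨K + K - Q.natAbs, (((K + K : ℤ) - Q.natAbs - P).toNat) / 2,
    (((Q.natAbs : ℤ) - Q).toNat) / 2, by omega, by omega, by omega, by omega, by omega⟩

lemma Mcount_pos (k a b j r s : ℕ) (hj : j ≤ k) (hr : r ≤ j) (hs : s ≤ k - j)
    (h1 : 2 * r + (k - j) = a) (h2 : 2 * s + j = b) : 0 < Mcount k a b := by
  have t1 : 0 < k.choose j * j.choose r * (k - j).choose s :=
    Nat.mul_pos (Nat.mul_pos (Nat.choose_pos hj) (Nat.choose_pos hr)) (Nat.choose_pos hs)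
  have hA : (if (2 * r + (k - j) = a ∧ 2 * s + j = b) then
      k.choose j * j.choose r * (k - j).choose s else 0)
      ≤ ∑ s' ∈ range (k - j + 1), (if (2 * r + (k - j) = a ∧ 2 * s' + j = b) then
          k.choose j * j.choose r * (k - j).choose s' else 0) :=
    Finset.single_le_sum (f := fun s' => if (2 * r + (k - j) = a ∧ 2 * s' + j = b) then
          k.choose j * j.choose r * (k - j).choose s' else 0)
      (fun i _ => Nat.zero_le _) (Finset.mem_range_succ_iff.mpr hs)
  have hB : (∑ s' ∈ range (k - j + 1), (if (2 * r + (k - j) = a ∧ 2 * s' + j = b) then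
          k.choose j * j.choose r * (k - j).choose s' else 0))
      ≤ ∑ r' ∈ range (j + 1), ∑ s' ∈ range (k - j + 1),
          (if (2 * r' + (k - j) = a ∧ 2 * s' + j = b) then
            k.choose j * j.choose r' * (k - j).choose s' else 0) :=
    Finset.single_le_sum (f := fun r' => ∑ s' ∈ range (k - j + 1),
        (if (2 * r' + (k - j) = a ∧ 2 * s' + j = b) then
            k.choose j * j.choose r' * (k - j).choose s' else 0))
      (fun i _ => Nat.zero_le _) (Finset.mem_range_succ_iff.mpr hr)
  have hC : (∑ r' ∈ range (j + 1), ∑ s' ∈ range (k - j + 1),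
          (if (2 * r' + (k - j) = a ∧ 2 * s' + j = b) then
            k.choose j * j.choose r' * (k - j).choose s' else 0)) ≤ Mcount k a b :=
    Finset.single_le_sum (f := fun j' => ∑ r' ∈ range (j' + 1), ∑ s' ∈ range (k - j' + 1),
        (if (2 * r' + (k - j') = a ∧ 2 * s' + j' = b) then
            k.choose j' * j'.choose r' * (k - j').choose s' else 0))
      (fun i _ => Nat.zero_le _) (Finset.mem_range_succ_iff.mpr hj)
  rw [if_pos ⟨h1, h2⟩] at hA
  omega

/-- For `k` even, the `(k+1)²` polynomials `Φᵏ_IJ`, `I,J ∈ {0,…,k}`, are linearly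
independent over `ℂ`. -/
theorem phi_linearIndependent (k : ℕ) (hk : Even k) :
    LinearIndependent ℂ
      (fun IJ : Fin (k + 1) × Fin (k + 1) => Phi k (IJ.1 : ℕ) (IJ.2 : ℕ)) := by
  rw [Fintype.linearIndependent_iff]
  intro g hg
  have hvan : ∀ p q : ℕ, p ≤ k → q ≤ k →
      (∑ IJ : Fin (k + 1) × Fin (k + 1),
        g IJ * Ek k ((IJ.1 : ℤ) * p + (IJ.2 : ℤ) * q)) = 0 := by
    intro p q hp hq
    obtain ⟨j, r, s, hj, hr, hs, hd1, hd2⟩ := exists_jrs k p q hk hp hq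
    set a := 2 * r + (k - j) with hadef
    set b := 2 * s + j with hbdef
    have ha : ((k : ℤ) + 1) ∣ ((k : ℤ) - a - p) := by
      have e : (k : ℤ) - a - p = (j : ℤ) - 2 * r - p := by omega
      rw [e]
      rcases hd1 with h | h
      · exact ⟨0, by omega⟩
      · exact ⟨-1, by omega⟩
    have hb : ((k : ℤ) + 1) ∣ ((k : ℤ) - b - q) := by
      have e : (k : ℤ) - b - q = (k : ℤ) - j - 2 * s - q := by omega
      rw [e]
      rcases hd2 with h | h
      · exact ⟨0, by omega⟩
      · exact ⟨-1, by omega⟩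
    have happ : ∑ IJ : Fin (k + 1) × Fin (k + 1),
        g IJ • (cf a b (σ4 (Phi k (IJ.1 : ℕ) (IJ.2 : ℕ)))) = 0 := by
      have := congrArg (fun pol => cf a b (σ4 pol)) hg
      simpa [map_sum, map_smul] using this
    have hval : ∀ IJ : Fin (k + 1) × Fin (k + 1),
        cf a b (σ4 (Phi k (IJ.1 : ℕ) (IJ.2 : ℕ)))
          = (Mcount k a b : ℂ) * Ek k (((IJ.1 : ℕ) : ℤ) * p + (((IJ.2 : ℕ)) : ℤ) * q) := by
      intro IJ
      rw [Phi, map_pow, sigma4_linPoly, cf_pow k _ _ a b p q ha hb]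
    rw [Finset.sum_congr rfl (fun IJ _ => by rw [hval IJ])] at happ
    have hM : (Mcount k a b : ℂ) ≠ 0 := by
      have := Mcount_pos k a b j r s hj hr hs rfl rfl
      exact_mod_cast this.ne'
    have : (Mcount k a b : ℂ) * (∑ IJ : Fin (k + 1) × Fin (k + 1),
        g IJ * Ek k ((IJ.1 : ℤ) * p + (IJ.2 : ℤ) * q)) = 0 := by
      rw [Finset.mul_sum]
      rw [← happ]
      refine Finset.sum_congr rfl (fun IJ _ => ?_)
      simp only [smul_eq_mul]
      ring
    exact (mul_eq_zero.mp this).resolve_left hM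
  intro IJ0
  obtain ⟨I₀, J₀⟩ := IJ0
  have h0 : ∑ p ∈ range (k + 1), ∑ q ∈ range (k + 1),
      Ek k (-((I₀ : ℤ) * p) - (J₀ : ℤ) * q) *
        (∑ IJ : Fin (k + 1) × Fin (k + 1),
          g IJ * Ek k ((IJ.1 : ℤ) * p + (IJ.2 : ℤ) * q)) = 0 := by
    apply Finset.sum_eq_zero
    intro p hp
    apply Finset.sum_eq_zero
    intro q hq
    rw [hvan p q (Finset.mem_range_succ_iff.mp hp) (Finset.mem_range_succ_iff.mp hq), mul_zero]
  have h1 : ∑ p ∈ range (k + 1), ∑ q ∈ range (k + 1),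
      Ek k (-((I₀ : ℤ) * p) - (J₀ : ℤ) * q) *
        (∑ IJ : Fin (k + 1) × Fin (k + 1),
          g IJ * Ek k ((IJ.1 : ℤ) * p + (IJ.2 : ℤ) * q))
      = ∑ IJ : Fin (k + 1) × Fin (k + 1), g IJ *
          ((∑ p ∈ range (k + 1), Ek k (((IJ.1 : ℤ) - I₀) * p)) *
           (∑ q ∈ range (k + 1), Ek k (((IJ.2 : ℤ) - J₀) * q))) := by
    calc ∑ p ∈ range (k + 1), ∑ q ∈ range (k + 1),
          Ek k (-((I₀ : ℤ) * p) - (J₀ : ℤ) * q) *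
            (∑ IJ : Fin (k + 1) × Fin (k + 1), g IJ * Ek k ((IJ.1 : ℤ) * p + (IJ.2 : ℤ) * q))
        = ∑ p ∈ range (k + 1), ∑ q ∈ range (k + 1), ∑ IJ : Fin (k + 1) × Fin (k + 1),
            Ek k (-((I₀ : ℤ) * p) - (J₀ : ℤ) * q) * (g IJ * Ek k ((IJ.1 : ℤ) * p + (IJ.2 : ℤ) * q)) := by
          simp only [Finset.mul_sum]
      _ = ∑ p ∈ range (k + 1), ∑ IJ : Fin (k + 1) × Fin (k + 1), ∑ q ∈ range (k + 1),
            Ek k (-((I₀ : ℤ) * p) - (J₀ : ℤ) * q) * (g IJ * Ek k ((IJ.1 : ℤ) * p + (IJ.2 : ℤ) * q)) :=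
          Finset.sum_congr rfl (fun p _ => Finset.sum_comm)
      _ = ∑ IJ : Fin (k + 1) × Fin (k + 1), ∑ p ∈ range (k + 1), ∑ q ∈ range (k + 1),
            Ek k (-((I₀ : ℤ) * p) - (J₀ : ℤ) * q) * (g IJ * Ek k ((IJ.1 : ℤ) * p + (IJ.2 : ℤ) * q)) :=
          Finset.sum_comm
      _ = _ := by
          refine Finset.sum_congr rfl (fun IJ _ => ?_)
          rw [Finset.sum_mul_sum, Finset.mul_sum]
          refine Finset.sum_congr rfl (fun p _ => ?_)
          rw [Finset.mul_sum]
          refine Finset.sum_congr rfl (fun q _ => ?_)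
          have hEE : Ek k (((IJ.1 : ℤ) - I₀) * p) * Ek k (((IJ.2 : ℤ) - J₀) * q)
              = Ek k (-((I₀ : ℤ) * p) - (J₀ : ℤ) * q) * Ek k ((IJ.1 : ℤ) * p + (IJ.2 : ℤ) * q) := by
            rw [← Ek_add, ← Ek_add]
            congr 1
            ring
          rw [hEE]
          ring
  have hdvd : ∀ (A B : Fin (k + 1)), (((k : ℤ) + 1) ∣ ((A : ℤ) - B)) ↔ A = B := by
    intro A B
    constructor
    · rintro ⟨t, ht⟩
      have hA : ((A : ℕ) : ℤ) < (k : ℤ) + 1 := by exact_mod_cast A.isLt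
      have hB : ((B : ℕ) : ℤ) < (k : ℤ) + 1 := by exact_mod_cast B.isLt
      have hA0 : (0 : ℤ) ≤ ((A : ℕ) : ℤ) := Int.natCast_nonneg _
      have hB0 : (0 : ℤ) ≤ ((B : ℕ) : ℤ) := Int.natCast_nonneg _
      have ht0 : t = 0 := by
        rcases lt_trichotomy t 0 with h | h | h
        · nlinarith
        · exact h
        · nlinarith
      rw [ht0, mul_zero, sub_eq_zero] at ht
      have : (A : ℕ) = (B : ℕ) := by exact_mod_cast ht
      exact Fin.ext this
    · rintro rfl
      simp
  have h2 : ∀ (A B : Fin (k + 1)), (∑ p ∈ range (k + 1), Ek k (((A : ℤ) - B) * p))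
      = if A = B then ((k : ℕ) + 1 : ℂ) else 0 := by
    intro A B
    rw [Ek_sum]
    exact if_congr (hdvd A B) rfl rfl
  rw [h1] at h0
  have h3 : ∑ IJ : Fin (k + 1) × Fin (k + 1), g IJ *
      ((if IJ.1 = I₀ then ((k : ℕ) + 1 : ℂ) else 0) *
       (if IJ.2 = J₀ then ((k : ℕ) + 1 : ℂ) else 0)) = 0 := by
    calc ∑ IJ : Fin (k + 1) × Fin (k + 1), g IJ *
          ((if IJ.1 = I₀ then ((k : ℕ) + 1 : ℂ) else 0) *
           (if IJ.2 = J₀ then ((k : ℕ) + 1 : ℂ) else 0))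
        = ∑ IJ : Fin (k + 1) × Fin (k + 1), g IJ *
            ((∑ p ∈ range (k + 1), Ek k (((IJ.1 : ℤ) - I₀) * p)) *
             (∑ q ∈ range (k + 1), Ek k (((IJ.2 : ℤ) - J₀) * q))) :=
          Finset.sum_congr rfl (fun IJ _ => by rw [h2 IJ.1 I₀, h2 IJ.2 J₀])
      _ = 0 := h0
  rw [Fintype.sum_prod_type] at h3
  simp only [mul_ite, mul_zero, ite_mul, zero_mul, Finset.sum_ite_eq', Finset.mem_univ,
    if_true] at h3
  have hk1 : ((k : ℕ) + 1 : ℂ) ≠ 0 := Nat.cast_add_one_ne_zero k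
  have := mul_ne_zero hk1 hk1
  rcases mul_eq_zero.mp h3 with h | h
  · exact h
  · exact absurd (mul_eq_zero.mp h) (by push_neg; exact ⟨hk1, hk1⟩)
end

section
/- Let k be an even natural number and I,J ∈ {0,…,k}. The complex quaternion n_IJ is null, i.e. n_IJ · n̄_IJ = 0 (equivalently ⟨n_IJ·n_IJ⟩ = 0), and the auxiliary quaternions satisfy ⟨a·n_IJ⟩ = ρ^I, ⟨ā·n_IJ⟩ = ρ^{−I}, ⟨b·n_IJ⟩ = ρ^J, ⟨d·n_IJ⟩ = ρ^{−J}. -/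
/-- The scalar product `⟨q·q'⟩ = aa' + bb' + cc' + dd'` of two complex quaternions
(the scalar part of `(q q̄' + q' q̄)/2`). -/
noncomputable def scalProd (q q' : Quaternion ℂ) : ℂ :=
  q.re * q'.re + q.imI * q'.imI + q.imJ * q'.imJ + q.imK * q'.imK

/-- `ρ := e^{2πi/(k+1)}`, a primitive `(k+1)`-th root of unity. -/
noncomputable def rhoK (k : ℕ) : ℂ := Complex.exp (2 * Real.pi * Complex.I / (k + 1))

/-- The complex quaternion `n_IJ = cos(Iα) + i sin(Jα) j₁ + i cos(Jα) j₂ + sin(Iα) j₃`. -/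
noncomputable def nQ (k I J : ℕ) : Quaternion ℂ :=
  ⟨(Real.cos (I * alphaK k) : ℂ), Complex.I * (Real.sin (J * alphaK k) : ℂ),
    Complex.I * (Real.cos (J * alphaK k) : ℂ), (Real.sin (I * alphaK k) : ℂ)⟩

/-- The auxiliary complex quaternion `a = 1 + i j₃`. -/
noncomputable def qa : Quaternion ℂ := ⟨1, 0, 0, Complex.I⟩
/-- The auxiliary complex quaternion `b = j₁ − i j₂`. -/
noncomputable def qb : Quaternion ℂ := ⟨0, 1, -Complex.I, 0⟩
/-- The auxiliary complex quaternion `d = −j₁ − i j₂`. -/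
noncomputable def qd : Quaternion ℂ := ⟨0, -1, -Complex.I, 0⟩

lemma rhoK_zpow (k : ℕ) (n : ℤ) :
    rhoK k ^ n = (Real.cos (n * alphaK k) : ℂ) + (Real.sin (n * alphaK k) : ℂ) * Complex.I := by
  have hne : ((k : ℂ) + 1) ≠ 0 := by exact_mod_cast (Nat.succ_ne_zero k)
  have : rhoK k ^ n = Complex.exp ((((n : ℝ) * alphaK k : ℝ) : ℂ) * Complex.I) := by
    rw [rhoK, ← Complex.exp_int_mul]
    congr 1
    unfold alphaK
    push_cast
    field_simp
  rw [this, Complex.exp_mul_I, Complex.ofReal_cos, Complex.ofReal_sin]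

/-- The complex quaternion `n_IJ` is null (`⟨n_IJ·n_IJ⟩ = 0`), and the auxiliary
quaternions satisfy `⟨a·n_IJ⟩ = ρ^I`, `⟨ā·n_IJ⟩ = ρ^{−I}`, `⟨b·n_IJ⟩ = ρ^J`,
`⟨d·n_IJ⟩ = ρ^{−J}`. -/
theorem nQ_null_and_aux_scalProds (k : ℕ) (hk : Even k) (I J : Fin (k + 1)) :
    scalProd (nQ k I J) (nQ k I J) = 0
    ∧ scalProd qa (nQ k I J) = rhoK k ^ (I : ℕ)
    ∧ scalProd (star qa) (nQ k I J) = rhoK k ^ (-(I : ℤ))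
    ∧ scalProd qb (nQ k I J) = rhoK k ^ (J : ℕ)
    ∧ scalProd qd (nQ k I J) = rhoK k ^ (-(J : ℤ)) := by
  have hI := rhoK_zpow k (I : ℕ)
  have hI' := rhoK_zpow k (-(I : ℤ))
  have hJ := rhoK_zpow k (J : ℕ)
  have hJ' := rhoK_zpow k (-(J : ℤ))
  have eI : ((-(I : ℤ) : ℤ) : ℝ) * alphaK k = -((I : ℕ) * alphaK k) := by push_cast; ring
  have eJ : ((-(J : ℤ) : ℤ) : ℝ) * alphaK k = -((J : ℕ) * alphaK k) := by push_cast; ring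
  have eI2 : (((I : ℕ) : ℤ) : ℝ) * alphaK k = ((I : ℕ) * alphaK k) := by push_cast; ring
  have eJ2 : (((J : ℕ) : ℤ) : ℝ) * alphaK k = ((J : ℕ) * alphaK k) := by push_cast; ring
  rw [eI, Real.cos_neg, Real.sin_neg] at hI'
  rw [eJ, Real.cos_neg, Real.sin_neg] at hJ'
  rw [eI2] at hI
  rw [eJ2] at hJ
  rw [zpow_natCast] at hI hJ
  have hcs : ∀ x : ℝ, ((Real.cos x : ℂ))^2 + ((Real.sin x : ℂ))^2 = 1 := by
    intro x
    have h := Real.sin_sq_add_cos_sq x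
    have : ((Real.sin x ^ 2 + Real.cos x ^ 2 : ℝ) : ℂ) = (1 : ℂ) := by rw [h]; norm_num
    rw [Complex.ofReal_cos, Complex.ofReal_sin]
    push_cast at this
    linear_combination this
  refine ⟨?_, ?_, ?_, ?_, ?_⟩
  · simp only [scalProd, nQ]
    have h1 := hcs ((I : ℕ) * alphaK k)
    have h2 := hcs ((J : ℕ) * alphaK k)
    have hi : (Complex.I)^2 = -1 := Complex.I_sq
    linear_combination h1 + Complex.I^2 * h2 + hi
  · simp only [scalProd, nQ, qa]
    rw [hI]; ring
  · simp only [scalProd, Quaternion.re_star, Quaternion.imI_star,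
      Quaternion.imJ_star, Quaternion.imK_star]
    simp only [nQ, qa]
    rw [hI', Complex.ofReal_neg]; ring
  · simp only [scalProd, nQ, qb]
    rw [hJ]
    linear_combination (-(Real.cos ((J:ℕ) * alphaK k) : ℂ)) * Complex.I_sq
  · simp only [scalProd, nQ, qd]
    rw [hJ', Complex.ofReal_neg]
    linear_combination (-(Real.cos ((J:ℕ) * alphaK k) : ℂ)) * Complex.I_sq
end
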